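/- arXiv:2306.16203 — 6 statements merged into one kernel-verified Lean document; each statement's English description precedes it below -/
import Mathlib

section
/- Bellman condition for efficient subtrees: for a connected undirected graph G = (V,E) with d-dimensional nonnegative edge costs and root s, every efficient spanning tree t of an induced subgraph G(W) with |W| ≥ 2 can be written as t = t' ∘ [u,w], where t' is an efficient spanning tree of G(U) for some U ⊂ W with |U| = |W| − 1, and [u,w] ∈ δ(U) with w ∈ W \ U. -/
/-- The cost vector of a set of edges: the componentwise sum of the edge cost vectors. -/
noncomputable def treeCost {V : Type*} [Fintype V] {d : ℕ}
    (c : Sym2 V → (Fin d → ℝ)) (E : Set (Sym2 V)) : Fin d → ℝ :=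
  ∑ e ∈ E.toFinite.toFinset, c e

/-- `x` dominates `y` if `x ≤ y` componentwise and `x ≠ y`. -/
def Dominates {d : ℕ} (x y : Fin d → ℝ) : Prop := x ≤ y ∧ x ≠ y

/-- `t` is a spanning tree of the induced subgraph `G(U)`:
a subgraph of `G` with vertex set `U` that is connected and acyclic. -/
def IsSpanningTreeOf {V : Type*} (G : SimpleGraph V) (U : Set V)
    (t : G.Subgraph) : Prop :=
  t.verts = U ∧ t.coe.IsTree

/-- `t` is an efficient spanning tree of `G(U)`: no spanning tree of `G(U)` dominates it. -/
def IsEfficientSpanningTree {V : Type*} [Fintype V] {d : ℕ} (G : SimpleGraph V)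
    (c : Sym2 V → (Fin d → ℝ)) (U : Set V) (t : G.Subgraph) : Prop :=
  IsSpanningTreeOf G U t ∧
    ¬ ∃ t' : G.Subgraph, IsSpanningTreeOf G U t' ∧
      Dominates (treeCost c t'.edgeSet) (treeCost c t.edgeSet)

/-- The edge `e` lies in the cut `δ(U)`: it is an edge of `G` with exactly one endpoint in `U`. -/
def InCut {V : Type*} (G : SimpleGraph V) (U : Set V) (e : Sym2 V) : Prop :=
  e ∈ G.edgeSet ∧ ∃ u w : V, e = s(u, w) ∧ u ∈ U ∧ w ∉ U

/-- An arc of the transition graph out of node `U`, identified by an ordered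
preimage edge `(u, w)` with `u ∈ U`, `w ∉ U`, `[u,w] ∈ E`. -/
def TransStep {V : Type*} (G : SimpleGraph V) (U : Set V) (e : V × V) : Prop :=
  e.1 ∈ U ∧ e.2 ∉ U ∧ G.Adj e.1 e.2

/-- A path in the transition graph from node `U` to node `W`, recorded as the
list of (ordered) preimage edges of its arcs. -/
def TransWalk {V : Type*} (G : SimpleGraph V) : Set V → Set V → List (V × V) → Prop
  | U, W, [] => U = W
  | U, W, e :: p => TransStep G U e ∧ TransWalk G (insert e.2 U) W p

/-- The path `p` in the transition graph represents the tree `t`: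
the preimage edges of the arcs of `p` are exactly the edges of `t`. -/
def Represents {V : Type*} (G : SimpleGraph V) (p : List (V × V)) (t : G.Subgraph) : Prop :=
  t.edgeSet = {e | ∃ uw ∈ p, e = s(uw.1, uw.2)}

/-- The cost of a path in the transition graph: the sum of the costs of the
preimage edges of its arcs. -/
def walkCost {V : Type*} {d : ℕ} (c : Sym2 V → (Fin d → ℝ))
    (p : List (V × V)) : Fin d → ℝ :=
  (p.map fun uw => c s(uw.1, uw.2)).sum

/-- The set of nondominated vectors of `Y`. -/
def NDSet {d : ℕ} (Y : Set (Fin d → ℝ)) : Set (Fin d → ℝ) :=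
  {y ∈ Y | ¬ ∃ y' ∈ Y, y' ≤ y ∧ y' ≠ y}


open SimpleGraph

section Aux
variable {α : Type*} {T : SimpleGraph α}

/-- A tree with at least two vertices has a leaf. -/
lemma exists_leaf [Fintype α] [DecidableRel T.Adj] (hT : T.IsTree)
    (h2 : 2 ≤ Fintype.card α) : ∃ w, T.degree w = 1 := by
  by_contra h
  push_neg at h
  have hpos : ∀ v : α, 0 < T.degree v := by
    intro v
    rw [T.degree_pos_iff_exists_adj]
    obtain ⟨u, hu⟩ := Fintype.exists_ne_of_one_lt_card (by omega) v
    obtain ⟨p⟩ := hT.isConnected v u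
    have hnil : ¬ p.Nil := by
      intro hn
      exact hu.symm (hn.eq)
    exact ⟨p.getVert 1, Walk.adj_snd hnil⟩
  have h2le : ∀ v : α, 2 ≤ T.degree v := by
    intro v
    have := hpos v
    have := h v
    omega
  have hsum : ∑ v : α, T.degree v = 2 * T.edgeFinset.card :=
    T.sum_degrees_eq_twice_card_edges
  have hcard : T.edgeFinset.card + 1 = Fintype.card α := hT.card_edgeFinset
  have : 2 * Fintype.card α ≤ ∑ v : α, T.degree v := by
    calc 2 * Fintype.card α = ∑ _v : α, 2 := by simp [mul_comm]
    _ ≤ ∑ v : α, T.degree v := Finset.sum_le_sum fun v _ => h2le v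
  omega

/-- Any path between vertices different from a leaf `w` avoids `w`. -/
lemma path_avoid {w u : α} (hw : ∀ x, T.Adj w x → x = u) {a b : α}
    (ha : a ≠ w) (hb : b ≠ w) {p : T.Walk a b} (hp : p.IsPath) : w ∉ p.support := by
  classical
  intro hmem
  set q := p.takeUntil w hmem with hq
  set r := p.dropUntil w hmem with hr
  have hspec : q.append r = p := p.take_spec hmem
  have hnodup : (q.append r).support.Nodup := by rw [hspec]; exact hp.support_nodup
  rw [Walk.support_append] at hnodup
  have hdisj := List.disjoint_of_nodup_append hnodup
  -- u ∈ q.support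
  have hqn : ¬ q.Nil := by
    intro hn
    have : a = w := hn.eq
    exact ha this
  have huq : u ∈ q.support := by
    have hqrn : ¬ q.reverse.Nil := by
      intro hn; apply hqn
      rw [Walk.nil_iff_length_eq] at hn ⊢
      simpa using hn
    obtain ⟨x, hx, q2, hq2⟩ := Walk.not_nil_iff.mp hqrn
    have hxu : x = u := hw x hx
    have : x ∈ q.reverse.support := by rw [hq2]; simp
    rw [Walk.support_reverse] at this
    simpa [hxu] using List.mem_reverse.mp this
  -- u ∈ r.support.tail
  have hrn : ¬ r.Nil := by
    intro hn
    exact hb (hn.eq.symm ▸ rfl)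
  have hur : u ∈ r.support.tail := by
    obtain ⟨x, hx, r2, hr2⟩ := Walk.not_nil_iff.mp hrn
    have hxu : x = u := hw x hx
    rw [hr2]
    simp [hxu.symm]
  exact hdisj huq hur

/-- No cycle passes through a vertex with a unique neighbor. -/
lemma cycle_avoid {w u : α} (hw : ∀ x, T.Adj w x → x = u) {a : α}
    {c : T.Walk a a} (hc : c.IsCycle) : w ∉ c.support := by
  classical
  intro hmem
  have hc' : (c.rotate w hmem).IsCycle := hc.rotate hmem
  obtain ⟨x, hx, q, hq⟩ := Walk.not_nil_iff.mp hc'.not_nil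
  have hxu : x = u := hw x hx
  have hqp : q.IsPath := ((Walk.cons_isCycle_iff q hx).mp (hq ▸ hc')).1  -- maybe adjust
  have hqrp : q.reverse.IsPath := hqp.reverse
  have hqrn : ¬ q.reverse.Nil := by
    intro hn
    exact hx.ne (hn.eq)  -- w = u
  obtain ⟨y, hy, q2, hq2⟩ := Walk.not_nil_iff.mp hqrn
  have hyu : y = u := hw y hy
  have hyx : y = x := hyu.trans hxu.symm
  subst hyx
  have hq2p : q2.IsPath := by
    have := hq2 ▸ hqrp
    exact this.of_cons
  have : q2 = Walk.nil := Walk.isPath_iff_eq_nil.mp hq2p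
  have hlen : q.length = 1 := by
    have : q.reverse.length = 1 := by rw [hq2, this]; simp
    simpa using this
  have h3 := hc'.three_le_length
  rw [hq] at h3
  simp [hlen] at h3

/-- A walk whose darts are all in `H` and whose start is in `H` has `toSubgraph ≤ H`. -/
lemma walk_toSubgraph_le {V : Type*} {G : SimpleGraph V} {H : G.Subgraph} :
    ∀ {a b : V} (p : G.Walk a b), a ∈ H.verts →
      (∀ d ∈ p.darts, H.Adj d.fst d.snd) → p.toSubgraph ≤ H := by
  intro a b p
  induction p with
  | nil =>
    intro ha _
    simpa [singletonSubgraph_le_iff] using ha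
  | @cons a c b h p ih =>
    intro ha hd
    have h1 : H.Adj a c := hd ⟨(a, c), h⟩ (by simp)
    exact sup_le (SimpleGraph.subgraphOfAdj_le_of_adj H h1)
      (ih h1.snd_mem fun d hdm => hd d (by simp [hdm]))

/-- Lift a walk in `G` whose edges lie in `H` to a walk in `H.coe`. -/
lemma exists_lift {V : Type*} {G : SimpleGraph V} {H : G.Subgraph} :
    ∀ {a b : V} (p : G.Walk a b) (_ : ∀ e ∈ p.edges, e ∈ H.edgeSet)
      (ha : a ∈ H.verts) (hb : b ∈ H.verts),
      ∃ q : H.coe.Walk ⟨a, ha⟩ ⟨b, hb⟩, q.map H.hom = p := by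
  intro a b p
  induction p with
  | nil => intro _ ha hb; exact ⟨Walk.nil, rfl⟩
  | @cons a c b h p ih =>
    intro he ha hb
    have h1 : H.Adj a c := by
      have := he s(a, c) (by simp)
      rwa [Subgraph.mem_edgeSet] at this
    obtain ⟨q, hq⟩ := ih (fun e hee => he e (by simp [hee])) h1.snd_mem hb
    exact ⟨Walk.cons (by simpa using h1) q, by simp [hq]⟩

end Aux

section Mid
variable {V : Type*} {G : SimpleGraph V}

/-- Attaching a pendant edge to a spanning tree gives a spanning tree. -/
lemma pendant_tree {U : Set V} {u w : V} (h : G.Adj u w) {H : G.Subgraph}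
    (hH : IsSpanningTreeOf G U H) (hu : u ∈ U) (hw : w ∉ U) :
    IsSpanningTreeOf G (insert w U) (H ⊔ G.subgraphOfAdj h) := by
  classical
  obtain ⟨hverts, htree⟩ := hH
  set S := H ⊔ G.subgraphOfAdj h with hS
  have hwS : w ∈ S.verts := by simp [hS]
  have huS : u ∈ S.verts := by simp [hS]
  have hnotH : ∀ y, ¬ H.Adj w y := fun y hy => hw (hverts ▸ hy.fst_mem)
  have huniq : ∀ x : S.verts, S.coe.Adj ⟨w, hwS⟩ x → x = ⟨u, huS⟩ := by
    rintro ⟨x, hx⟩ hadj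
    rw [Subgraph.coe_adj] at hadj
    rcases hadj with hadj | hadj
    · exact absurd hadj (hnotH x)
    · simp only [subgraphOfAdj_adj] at hadj
      rcases Sym2.eq_iff.mp hadj with ⟨h1, h2⟩ | ⟨h1, h2⟩
      · exact absurd h1 h.ne
      · exact Subtype.ext h1.symm
  refine ⟨?_, ?_, ?_⟩
  · rw [Subgraph.verts_sup, hverts, subgraphOfAdj_verts]
    ext x; constructor
    · rintro (hx | rfl | rfl)
      · exact Set.mem_insert_of_mem _ hx
      · exact Set.mem_insert_of_mem _ hu
      · exact Set.mem_insert _ _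
    · rintro (rfl | hx)
      · exact Or.inr (Or.inr rfl)
      · exact Or.inl hx
  · refine Subgraph.Connected.coe (Subgraph.connected_sup ?_ (Subgraph.subgraphOfAdj_connected h).preconnected ?_)
    · exact (Subgraph.connected_iff'.mpr htree.isConnected).preconnected
    · exact ⟨u, by simp [hverts, hu]⟩
  · -- acyclic
    intro a c hc
    have hwsupp : (⟨w, hwS⟩ : S.verts) ∉ c.support := cycle_avoid huniq hc
    -- map the cycle down to G
    have hcG : (c.map S.hom).IsCycle := hc.map Subgraph.hom_injective
    have hedges : ∀ e ∈ (c.map S.hom).edges, e ∈ H.edgeSet := by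
      intro e he
      rw [Walk.edges_map, List.mem_map] at he
      obtain ⟨e0, he0, rfl⟩ := he
      induction e0 with
      | _ x y =>
        have hadj : S.coe.Adj x y := Walk.adj_of_mem_edges c he0
        have hx : x ∈ c.support := Walk.fst_mem_support_of_mem_edges c he0
        have hy : y ∈ c.support := Walk.snd_mem_support_of_mem_edges c he0
        have hxw : (x : V) ≠ w := fun hxx => hwsupp (by rwa [show x = ⟨w, hwS⟩ from Subtype.ext hxx] at hx)
        have hyw : (y : V) ≠ w := fun hyy => hwsupp (by rwa [show y = ⟨w, hwS⟩ from Subtype.ext hyy] at hy)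
        rw [Subgraph.coe_adj] at hadj
        rcases hadj with hadj | hadj
        · exact hadj
        · simp only [subgraphOfAdj_adj] at hadj
          rcases Sym2.eq_iff.mp hadj with ⟨h1, h2⟩ | ⟨h1, h2⟩
          · exact absurd h2.symm hyw
          · exact absurd h2.symm hxw
    have haH : (a : V) ∈ H.verts := by
      obtain ⟨x, hx, q, hq⟩ := Walk.not_nil_iff.mp hcG.not_nil
      have hmem : s((a : V), x) ∈ (c.map S.hom).edges := by rw [hq]; exact List.mem_cons.mpr (Or.inl rfl)
      exact (Subgraph.mem_edgeSet.mp (hedges _ hmem)).fst_mem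
    obtain ⟨q, hq⟩ := exists_lift (c.map S.hom) hedges haH haH
    have : q.IsCycle := by
      rw [← Walk.map_isCycle_iff_of_injective Subgraph.hom_injective, hq]
      exact hcG
    exact htree.IsAcyclic q this

/-- Deleting a leaf from a spanning tree gives a spanning tree. -/
lemma delete_leaf_tree {W : Set V} {t : G.Subgraph} (hst : IsSpanningTreeOf G W t)
    {w u : V} (huniq : ∀ x, t.Adj w x → x = u) (hadj : t.Adj w u) :
    IsSpanningTreeOf G (W \ {w}) (t.deleteVerts {w}) := by
  classical
  obtain ⟨hverts, htree⟩ := hst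
  subst hverts
  have hwv : w ∈ t.verts := hadj.fst_mem
  have huv : u ∈ t.verts := hadj.snd_mem
  have hneuw : u ≠ w := fun h => (t.adj_sub hadj).ne' h
  have huniq' : ∀ x : t.verts, t.coe.Adj ⟨w, hwv⟩ x → x = ⟨u, huv⟩ := by
    rintro ⟨x, hx⟩ hxadj
    rw [Subgraph.coe_adj] at hxadj
    exact Subtype.ext (huniq x hxadj)
  refine ⟨by simp, ?_, ?_⟩
  · -- connected
    rw [← Subgraph.connected_iff', Subgraph.connected_iff]
    constructor
    · rw [Subgraph.preconnected_iff_forall_exists_walk_subgraph]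
      rintro a b ha hb
      simp only [Subgraph.deleteVerts_verts, Set.mem_diff, Set.mem_singleton_iff] at ha hb
      obtain ⟨p0⟩ := htree.isConnected ⟨a, ha.1⟩ ⟨b, hb.1⟩
      set pw : t.coe.Walk ⟨a, ha.1⟩ ⟨b, hb.1⟩ := p0.toPath.val with hpw
      have hpp : pw.IsPath := p0.toPath.isPath
      have hwp : (⟨w, hwv⟩ : t.verts) ∉ pw.support :=
        path_avoid huniq' (fun hh => ha.2 (congrArg Subtype.val hh))
          (fun hh => hb.2 (congrArg Subtype.val hh)) hpp
      refine ⟨(pw.map t.hom : G.Walk a b), ?_⟩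
      apply walk_toSubgraph_le
      · simp [ha.1, ha.2]
      · intro d hd
        erw [Walk.darts_map, List.mem_map] at hd
        obtain ⟨d0, hd0, rfl⟩ := hd
        have hadj0 : t.coe.Adj d0.fst d0.snd := d0.adj
        have h1 : d0.fst ∈ pw.support := Walk.dart_fst_mem_support_of_mem_darts _ hd0
        have h2 : d0.snd ∈ pw.support := Walk.dart_snd_mem_support_of_mem_darts _ hd0
        rw [Subgraph.coe_adj] at hadj0
        simp only [Subgraph.deleteVerts_adj, Set.mem_singleton_iff]
        refine ⟨hadj0.fst_mem, ?_, hadj0.snd_mem, ?_, hadj0⟩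
        · exact fun hh => hwp (by rwa [show d0.fst = ⟨w, hwv⟩ from Subtype.ext hh] at h1)
        · exact fun hh => hwp (by rwa [show d0.snd = ⟨w, hwv⟩ from Subtype.ext hh] at h2)
    · exact ⟨u, by simp [huv, hneuw]⟩
  · -- acyclic
    intro a c hc
    have : (c.map (Subgraph.inclusion (t.deleteVerts_le))).IsCycle :=
      hc.map (Subgraph.inclusion.injective _)
    exact htree.IsAcyclic _ this

lemma treeCost_insert {V : Type*} [Fintype V] {d : ℕ} (c : Sym2 V → (Fin d → ℝ))
    {E : Set (Sym2 V)} {e : Sym2 V} (he : e ∉ E) :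
    treeCost c (insert e E) = c e + treeCost c E := by
  classical
  unfold treeCost
  rw [show (insert e E).toFinite.toFinset = insert e E.toFinite.toFinset from by
    ext x; simp only [Set.Finite.mem_toFinset, Finset.mem_insert, Set.mem_insert_iff]]
  rw [Finset.sum_insert (by simp only [Set.Finite.mem_toFinset]; exact he)]

lemma cost_sup_pendant {V : Type*} [Fintype V] {d : ℕ} {G : SimpleGraph V}
    (c : Sym2 V → (Fin d → ℝ)) {H : G.Subgraph} {u w : V} (h : G.Adj u w)
    (hw : w ∉ H.verts) :
    treeCost c (H ⊔ G.subgraphOfAdj h).edgeSet = c s(u, w) + treeCost c H.edgeSet := by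
  have hmem : s(u, w) ∉ H.edgeSet := by
    rw [Subgraph.mem_edgeSet]
    exact fun hh => hw hh.snd_mem
  have : (H ⊔ G.subgraphOfAdj h).edgeSet = insert s(u, w) H.edgeSet := by
    rw [Subgraph.edgeSet_sup, G.edgeSet_subgraphOfAdj h]
    ext x; simp [or_comm]
  rw [this, treeCost_insert c hmem]

end Mid
/-- Bellman condition — every efficient spanning tree of `G(W)` with `|W| ≥ 2`
arises from an efficient spanning tree of `G(U)` with `U ⊂ W`, `|U| = |W| - 1`,
extended by a cut edge `[u,w] ∈ δ(U)` with `w ∈ W \ U`. -/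
theorem stmt_4 {V : Type*} [Fintype V] {d : ℕ} (G : SimpleGraph V)
    (hG : G.Connected) (c : Sym2 V → (Fin d → ℝ)) (hc : ∀ e, 0 ≤ c e)
    (s : V) (W : Set V) (hW : 2 ≤ W.ncard)
    (t : G.Subgraph) (ht : IsEfficientSpanningTree G c W t) :
    ∃ (U : Set V) (u w : V) (h : G.Adj u w) (t' : G.Subgraph),
      U ⊂ W ∧ U.ncard + 1 = W.ncard ∧ u ∈ U ∧ w ∈ W \ U ∧
      IsEfficientSpanningTree G c U t' ∧ t = t' ⊔ G.subgraphOfAdj h := by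
  classical
  obtain ⟨⟨hverts, htree⟩, heff⟩ := ht
  subst hverts
  letI : Fintype ↑t.verts := Fintype.ofFinite _
  letI : DecidableRel t.coe.Adj := Classical.decRel _
  have hcard : 2 ≤ Fintype.card ↑t.verts := by
    rwa [← Nat.card_eq_fintype_card, Nat.card_coe_set_eq]
  obtain ⟨w', hw'⟩ := exists_leaf htree hcard
  have hone : (t.coe.neighborFinset w').card = 1 := by
    rw [card_neighborFinset_eq_degree]; convert hw' using 2
  obtain ⟨u', hu'⟩ := Finset.card_eq_one.mp hone
  have hadj' : t.coe.Adj w' u' := by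
    have : u' ∈ t.coe.neighborFinset w' := by rw [hu']; exact Finset.mem_singleton_self _
    rwa [mem_neighborFinset] at this
  have huniq' : ∀ x, t.coe.Adj w' x → x = u' := by
    intro x hx
    have : x ∈ t.coe.neighborFinset w' := (mem_neighborFinset _ _ _).mpr hx
    rw [hu'] at this
    exact Finset.mem_singleton.mp this
  set w : V := ↑w' with hwdef
  set u : V := ↑u' with hudef
  have hwv : w ∈ t.verts := w'.2
  have huv : u ∈ t.verts := u'.2
  have htadj : t.Adj w u := by rw [← Subgraph.coe_adj]; exact hadj'
  have huniqV : ∀ x, t.Adj w x → x = u := by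
    intro x hx
    have hx' : t.coe.Adj w' ⟨x, hx.snd_mem⟩ := by rw [Subgraph.coe_adj]; exact hx
    exact congrArg Subtype.val (huniq' _ hx')
  have hGadj : G.Adj u w := (t.adj_sub htadj).symm
  have hneuw : u ≠ w := hGadj.ne
  set U : Set V := t.verts \ {w} with hUdef
  set t' : G.Subgraph := t.deleteVerts {w} with ht'def
  have hst' : IsSpanningTreeOf G U t' := delete_leaf_tree ⟨rfl, htree⟩ huniqV htadj
  have hwnU : w ∉ U := by simp [hUdef]
  have hunU : u ∈ U := ⟨huv, hneuw⟩
  have heq : t = t' ⊔ G.subgraphOfAdj hGadj := by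
    refine Subgraph.ext ?_ ?_
    · ext x
      simp only [Subgraph.verts_sup, ht'def, Subgraph.deleteVerts_verts, subgraphOfAdj_verts,
        Set.mem_union, Set.mem_diff, Set.mem_singleton_iff, Set.mem_insert_iff]
      constructor
      · intro hx
        by_cases hxw : x = w
        · exact Or.inr (Or.inr hxw)
        · exact Or.inl ⟨hx, hxw⟩
      · rintro (⟨hx, _⟩ | rfl | rfl)
        · exact hx
        · exact huv
        · exact hwv
    · ext x y
      simp only [Subgraph.sup_adj, ht'def, Subgraph.deleteVerts_adj, subgraphOfAdj_adj,
        Set.mem_singleton_iff]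
      constructor
      · intro hxy
        by_cases hxw : x = w
        · subst hxw
          have hyu : y = u := huniqV y hxy
          subst hyu
          exact Or.inr (Sym2.eq_swap)
        · by_cases hyw : y = w
          · subst hyw
            have hxu : x = u := huniqV x hxy.symm
            subst hxu
            exact Or.inr rfl
          · exact Or.inl ⟨hxy.fst_mem, hxw, hxy.snd_mem, hyw, hxy⟩
      · rintro (⟨_, _, _, _, h5⟩ | hh)
        · exact h5
        · rcases Sym2.eq_iff.mp hh with ⟨rfl, rfl⟩ | ⟨rfl, rfl⟩
          · exact htadj.symm
          · exact htadj
  have hins : insert w U = t.verts := by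
    ext x
    simp only [hUdef, Set.mem_insert_iff, Set.mem_diff, Set.mem_singleton_iff]
    constructor
    · rintro (rfl | ⟨hx, _⟩)
      · exact hwv
      · exact hx
    · intro hx
      by_cases hxw : x = w
      · exact Or.inl hxw
      · exact Or.inr ⟨hx, hxw⟩
  have heffT' : IsEfficientSpanningTree G c U t' := by
    refine ⟨hst', ?_⟩
    rintro ⟨t'', hst'', hle, hne⟩
    apply heff
    refine ⟨t'' ⊔ G.subgraphOfAdj hGadj, ?_, ?_⟩
    · have hp := pendant_tree hGadj hst'' hunU hwnU
      rwa [hins] at hp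
    · have h1 : treeCost c (t'' ⊔ G.subgraphOfAdj hGadj).edgeSet
          = c s(u, w) + treeCost c t''.edgeSet :=
        cost_sup_pendant c hGadj (hst''.1 ▸ hwnU)
      have h2 : treeCost c t.edgeSet = c s(u, w) + treeCost c t'.edgeSet := by
        conv_lhs => rw [heq]
        exact cost_sup_pendant c hGadj (by simp [ht'def])
      rw [h1, h2]
      exact ⟨add_le_add_right hle _, fun hcontra => hne (add_left_cancel hcontra)⟩
  refine ⟨U, u, w, hGadj, t', ?_, ?_, hunU, ?_, heffT', heq⟩
  · exact (Set.ssubset_iff_of_subset Set.diff_subset).mpr ⟨w, hwv, hwnU⟩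
  · exact Set.ncard_diff_singleton_add_one hwv t.verts.toFinite
  · exact ⟨hwv, hwnU⟩
end

section
/- Let G = (V,E) be a connected undirected graph with d-dimensional nonnegative edge costs c, and fix a root s ∈ V. Let t be an efficient spanning tree of G. Then for every edge e ∈ t there exists a vertex subset U ⊆ V containing s such that e ∈ δ(U) and e is not dominated by any other edge of δ(U), i.e., there is no edge e' ∈ δ(U) with c(e') ≤ c(e) componentwise and c(e') ≠ c(e). -/
open SimpleGraph

private lemma isTree_of_iso {α β : Type*} {A : SimpleGraph α} {B : SimpleGraph β}
    (φ : A ≃g B) (h : A.IsTree) : B.IsTree := by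
  constructor
  · exact (Iso.connected_iff φ).mp h.1
  · intro v p hp
    exact h.2 (p.map φ.symm.toHom) (hp.map φ.symm.injective)


private lemma key_lemma {V : Type*} [Fintype V] {d : ℕ} (G : SimpleGraph V)
    (c : Sym2 V → (Fin d → ℝ)) (t : G.Subgraph)
    (ht : IsEfficientSpanningTree G c Set.univ t)
    (u w : V) (he : s(u, w) ∈ t.edgeSet)
    (hur : ¬ (t.spanningCoe \ SimpleGraph.fromEdgeSet {s(u, w)}).Reachable u w)
    (hreach : ∀ v, (t.spanningCoe \ SimpleGraph.fromEdgeSet {s(u, w)}).Reachable u v ∨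
      (t.spanningCoe \ SimpleGraph.fromEdgeSet {s(u, w)}).Reachable w v)
    (s : V) (hs : (t.spanningCoe \ SimpleGraph.fromEdgeSet {s(u, w)}).Reachable u s) :
    ∃ U : Set V, s ∈ U ∧ InCut G U s(u, w) ∧
      ∀ e' : Sym2 V, InCut G U e' → ¬ (c e' ≤ c s(u, w) ∧ c e' ≠ c s(u, w)) := by
  classical
  obtain ⟨⟨hverts, htree⟩, hopt⟩ := ht
  set T := t.spanningCoe with hT
  set G' := T \ fromEdgeSet {s(u, w)} with hG'
  have hTtree : T.IsTree :=
    isTree_of_iso (t.spanningCoeEquivCoeOfSpanning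
      (Subgraph.isSpanning_iff.mpr hverts)).symm htree
  have hTe : T.edgeSet = t.edgeSet := rfl
  refine ⟨{v | G'.Reachable u v}, hs, ⟨t.edgeSet_subset he, u, w, rfl, Reachable.refl u, hur⟩, ?_⟩
  rintro e' ⟨he'G, u', w', rfl, hu', hw'⟩ ⟨hle, hne⟩
  have hadj' : G.Adj u' w' := he'G
  have hne' : s(u', w') ≠ s(u, w) := fun h => hne (by rw [h])
  have he'T : s(u', w') ∉ t.edgeSet := by
    intro hmem
    have hadjG' : G'.Adj u' w' := by
      rw [hG', SimpleGraph.sdiff_adj]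
      refine ⟨Subgraph.mem_edgeSet.mp hmem, ?_⟩
      rw [SimpleGraph.fromEdgeSet_adj]
      rintro ⟨h1, -⟩
      exact hne' (Set.mem_singleton_iff.mp h1)
    exact hw' (hu'.trans hadjG'.reachable)
  set T' := G' ⊔ fromEdgeSet {s(u', w')} with hT'
  have hG'T : G' ≤ T := sdiff_le
  have hT'G : T' ≤ G := by
    refine sup_le (le_trans hG'T t.spanningCoe_le) ?_
    intro a b hab
    rw [SimpleGraph.fromEdgeSet_adj, Set.mem_singleton_iff] at hab
    rw [← SimpleGraph.mem_edgeSet, hab.1]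
    exact he'G
  have hG'T' : G' ≤ T' := le_sup_left
  have hT'adj : T'.Adj u' w' := by
    rw [hT', sup_adj, SimpleGraph.fromEdgeSet_adj]
    exact Or.inr ⟨rfl, hadj'.ne⟩
  have hww' : G'.Reachable w w' := (hreach w').resolve_left hw'
  have huwT' : T'.Reachable u w :=
    ((hu'.mono hG'T').trans hT'adj.reachable).trans (hww'.mono hG'T').symm
  have hT'conn : T'.Connected := by
    rw [connected_iff]
    refine ⟨fun a b => ?_, ⟨u⟩⟩
    have key : ∀ v, T'.Reachable u v := by
      intro v
      rcases hreach v with h | h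
      · exact h.mono hG'T'
      · exact huwT'.trans (h.mono hG'T')
    exact (key a).symm.trans (key b)
  have hT'acyc : T'.IsAcyclic := by
    intro v p hp
    by_cases hm : s(u', w') ∈ p.edges
    · have hr := ((adj_and_reachable_delete_edges_iff_exists_cycle (G := T')).mpr
        ⟨v, p, hp, hm⟩).2
      have hle' : (T' \ fromEdgeSet {s(u', w')}) ≤ G' := by
        intro a b hab
        rw [SimpleGraph.sdiff_adj] at hab
        obtain ⟨h1, h2⟩ := hab
        rw [hT', sup_adj] at h1
        exact h1.resolve_right h2
      exact hw' (hu'.trans (hr.mono hle'))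
    · have hsub : ∀ f ∈ p.edges, f ∈ G'.edgeSet := by
        intro f hf
        have hfe := p.edges_subset_edgeSet hf
        rw [hT', edgeSet_sup] at hfe
        rcases hfe with h | h
        · exact h
        · rw [edgeSet_fromEdgeSet, Set.mem_diff, Set.mem_singleton_iff] at h
          exact absurd (h.1 ▸ hf) hm
      exact hTtree.2 _ ((hp.transfer hsub).mapLe hG'T)
  have hspan' := SimpleGraph.toSubgraph.isSpanning T' hT'G
  have hcoeTree : (SimpleGraph.toSubgraph T' hT'G).coe.IsTree :=
    isTree_of_iso ((SimpleGraph.toSubgraph T' hT'G).spanningCoeEquivCoeOfSpanning hspan')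
      ⟨hT'conn, hT'acyc⟩
  have hedges : (SimpleGraph.toSubgraph T' hT'G).edgeSet
      = (t.edgeSet \ {s(u, w)}) ∪ {s(u', w')} := by
    show T'.edgeSet = _
    rw [hT', edgeSet_sup, hG', edgeSet_sdiff, edgeSet_fromEdgeSet,
      edgeSet_sdiff_sdiff_isDiag, edgeSet_fromEdgeSet, hTe]
    congr 1
    ext f
    constructor
    · exact fun h => h.1
    · intro h
      rw [Set.mem_singleton_iff] at h
      subst h
      exact ⟨rfl, by simp [hadj'.ne]⟩
  -- cost computation
  have heA : s(u, w) ∈ t.edgeSet.toFinite.toFinset := by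
    rw [Set.Finite.mem_toFinset]; exact he
  have hfin : ((t.edgeSet \ {s(u, w)}) ∪ {s(u', w')}).toFinite.toFinset
      = insert s(u', w') (t.edgeSet.toFinite.toFinset.erase s(u, w)) := by
    ext f
    simp only [Set.Finite.mem_toFinset, Set.mem_union, Set.mem_diff, Set.mem_singleton_iff,
      Finset.mem_insert, Finset.mem_erase]
    tauto
  have hnotmem : s(u', w') ∉ t.edgeSet.toFinite.toFinset.erase s(u, w) := by
    intro h
    exact he'T (Set.Finite.mem_toFinset _ |>.mp (Finset.mem_of_mem_erase h))
  have hcost' : treeCost c ((t.edgeSet \ {s(u, w)}) ∪ {s(u', w')})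
      = c s(u', w') + ∑ f ∈ t.edgeSet.toFinite.toFinset.erase s(u, w), c f := by
    unfold treeCost
    rw [hfin, Finset.sum_insert hnotmem]
  have hcost : treeCost c t.edgeSet
      = c s(u, w) + ∑ f ∈ t.edgeSet.toFinite.toFinset.erase s(u, w), c f := by
    unfold treeCost
    rw [Finset.add_sum_erase _ _ heA]
  refine hopt ⟨SimpleGraph.toSubgraph T' hT'G, ⟨hspan'.verts_eq_univ, hcoeTree⟩, ?_⟩
  rw [hedges, hcost', hcost]
  constructor
  · exact add_le_add_left hle _
  · intro hEq
    exact hne (add_right_cancel hEq)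

/-- every edge of an efficient spanning tree lies, nondominated, in some cut
`δ(U)` with `s ∈ U`. -/
theorem stmt_5 {V : Type*} [Fintype V] {d : ℕ} (G : SimpleGraph V)
    (hG : G.Connected) (c : Sym2 V → (Fin d → ℝ)) (hc : ∀ e, 0 ≤ c e)
    (s : V) (t : G.Subgraph) (ht : IsEfficientSpanningTree G c Set.univ t) :
    ∀ e ∈ t.edgeSet, ∃ U : Set V, s ∈ U ∧ InCut G U e ∧
      ∀ e' : Sym2 V, InCut G U e' → ¬ (c e' ≤ c e ∧ c e' ≠ c e) := by
  classical
  intro e he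
  induction e using Sym2.ind with
  | _ x y =>
  have hspan : t.IsSpanning := Subgraph.isSpanning_iff.mpr ht.1.1
  have hTtree : t.spanningCoe.IsTree :=
    isTree_of_iso (t.spanningCoeEquivCoeOfSpanning hspan).symm ht.1.2
  have hxy : t.spanningCoe.Adj x y := Subgraph.mem_edgeSet.mp he
  set G' := t.spanningCoe \ fromEdgeSet {s(x, y)} with hG'
  have hbridge : ¬ G'.Reachable x y :=
    ((isAcyclic_iff_forall_adj_isBridge.mp hTtree.2) hxy)
  have hreach : ∀ v, G'.Reachable x v ∨ G'.Reachable y v := by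
    intro v
    obtain ⟨p⟩ := hTtree.1.preconnected x v
    suffices H : ∀ {a b : V} (_ : t.spanningCoe.Walk a b),
        (G'.Reachable x a ∨ G'.Reachable y a) → (G'.Reachable x b ∨ G'.Reachable y b) from
      H p (Or.inl (Reachable.refl x))
    intro a b p
    induction p with
    | nil => exact id
    | @cons a m b h q ih =>
      intro hab
      apply ih
      by_cases hedge : s(a, m) = s(x, y)
      · rw [Sym2.eq_iff] at hedge
        rcases hedge with ⟨-, rfl⟩ | ⟨-, rfl⟩
        · exact Or.inr (Reachable.refl _)
        · exact Or.inl (Reachable.refl _)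
      · have hadj : G'.Adj a m := by
          rw [hG', SimpleGraph.sdiff_adj]
          refine ⟨h, ?_⟩
          rw [SimpleGraph.fromEdgeSet_adj, Set.mem_singleton_iff]
          rintro ⟨h1, -⟩
          exact hedge h1
        rcases hab with h' | h'
        · exact Or.inl (h'.trans hadj.reachable)
        · exact Or.inr (h'.trans hadj.reachable)
  rcases hreach s with hsx | hsy
  · exact key_lemma G c t ht x y he hbridge hreach s hsx
  · have he2 : s(y, x) ∈ t.edgeSet := by rwa [Sym2.eq_swap]
    have hswap : s(y, x) = s(x, y) := Sym2.eq_swap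
    have hb2 : ¬ (t.spanningCoe \ fromEdgeSet {s(y, x)}).Reachable y x := by
      rw [hswap]; exact fun h => hbridge h.symm
    have hr2 : ∀ v, (t.spanningCoe \ fromEdgeSet {s(y, x)}).Reachable y v ∨
        (t.spanningCoe \ fromEdgeSet {s(y, x)}).Reachable x v := by
      intro v; rw [hswap]; exact (hreach v).symm
    have hs2 : (t.spanningCoe \ fromEdgeSet {s(y, x)}).Reachable y s := by rw [hswap]; exact hsy
    have := key_lemma G c t ht y x he2 hb2 hr2 s hs2
    rwa [hswap] at this
end

section
/- Let U ⊆ V contain the root s, and let [u,w], [u',w] be two edges of the cut δ(U) with u, u' ∈ U and w ∉ U. If [u,w] dominates [u',w] (i.e., c([u,w]) ≤ c([u',w]) componentwise and the costs differ), then [u',w] is not contained in any efficient spanning tree of G that contains an efficient spanning tree of G(U) as a subtree. -/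
open SimpleGraph

private lemma isTree_map_iso {V W : Type*} {A : SimpleGraph V} {B : SimpleGraph W}
    (f : A ≃g B) (hA : A.IsTree) : B.IsTree := by
  constructor
  · exact f.connected_iff.mp hA.isConnected
  · intro v c hc
    exact hA.IsAcyclic (c.map f.symm.toHom) (hc.map f.symm.toEquiv.injective)

private lemma reachable_of_adj_imp {V : Type*} {A B : SimpleGraph V}
    (hAB : ∀ a b : V, A.Adj a b → B.Reachable a b) {x y : V} (hr : A.Reachable x y) :
    B.Reachable x y := by
  obtain ⟨p⟩ := hr
  induction p with
  | nil => exact Reachable.refl _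
  | cons hadj _ ih => exact (hAB _ _ hadj).trans ih

private lemma edgeSet_toSubgraph' {V : Type*} {G H : SimpleGraph V} (hle : H ≤ G) :
    (SimpleGraph.toSubgraph H hle).edgeSet = H.edgeSet := by
  ext ed
  induction ed using Sym2.ind with
  | _ a b => simp [Subgraph.mem_edgeSet, SimpleGraph.mem_edgeSet, SimpleGraph.toSubgraph]


/-- if `[u,w]` dominates the parallel-cut edge `[u',w]` in `δ(U)`, then `[u',w]`
appears in no efficient spanning tree of `G` containing an efficient spanning tree of `G(U)`. -/
theorem stmt_7 {V : Type*} [Fintype V] {d : ℕ} (G : SimpleGraph V)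
    (hG : G.Connected) (c : Sym2 V → (Fin d → ℝ)) (hc : ∀ e, 0 ≤ c e)
    (s : V) (U : Set V) (hs : s ∈ U)
    (u u' w : V) (hu : u ∈ U) (hu' : u' ∈ U) (hw : w ∉ U)
    (h : G.Adj u w) (h' : G.Adj u' w)
    (hdom : c s(u, w) ≤ c s(u', w) ∧ c s(u, w) ≠ c s(u', w)) :
    ∀ t : G.Subgraph, IsEfficientSpanningTree G c Set.univ t →
      (∃ tU : G.Subgraph, IsEfficientSpanningTree G c U tU ∧ tU ≤ t) →
      s(u', w) ∉ t.edgeSet := by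
  
  classical
  rintro t ⟨⟨htverts, httree⟩, htmin⟩ ⟨tU, ⟨⟨htUverts, htUtree⟩, -⟩, htUle⟩ he'
  set T := t.spanningCoe with hT_def
  have hadj'T : T.Adj u' w := Subgraph.mem_edgeSet.mp he'
  have hspan : t.IsSpanning := Subgraph.isSpanning_iff.mpr htverts
  have hT : T.IsTree := isTree_map_iso (t.spanningCoeEquivCoeOfSpanning hspan).symm httree
  have hne : s(u, w) ≠ s(u', w) := fun hq => hdom.2 (congrArg c hq)
  set Td := T \ fromEdgeSet {s(u', w)} with hTd_def
  -- the subtree tU avoids the cut edges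
  have hTUle : tU.spanningCoe ≤ Td := by
    intro a b hab
    refine (sdiff_adj _ _ _ _).mpr ⟨htUle.2 hab, fun hf => ?_⟩
    have hm := ((fromEdgeSet_adj _).mp hf).1
    rcases Sym2.eq_iff.mp (Set.mem_singleton_iff.mp hm) with ⟨rfl, rfl⟩ | ⟨rfl, rfl⟩
    · exact hw (htUverts ▸ hab.snd_mem)
    · exact hw (htUverts ▸ hab.fst_mem)
  -- u' reaches u in T minus the edge s(u',w)
  have hreach0 : Td.Reachable u' u := by
    have hcoe : tU.coe.Reachable ⟨u', htUverts ▸ hu'⟩ ⟨u, htUverts ▸ hu⟩ :=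
      htUtree.isConnected.preconnected _ _
    have hψ : tU.spanningCoe.Reachable u' u :=
      hcoe.map (⟨fun a => a.1, fun hh => hh⟩ : tU.coe →g tU.spanningCoe)
    exact hψ.mono hTUle
  have hbridge : ¬ Td.Reachable u w := by
    intro hr
    obtain ⟨x, p, hp, -⟩ :=
      adj_and_reachable_delete_edges_iff_exists_cycle.mp ⟨hadj'T, hreach0.trans hr⟩
    exact hT.IsAcyclic p hp
  have henotin : s(u, w) ∉ T.edgeSet := by
    intro hmem
    refine hbridge (Adj.reachable ((sdiff_adj _ _ _ _).mpr ⟨(SimpleGraph.mem_edgeSet _).mp hmem,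
      fun hf => hne (Set.mem_singleton_iff.mp ((fromEdgeSet_adj _).mp hf).1)⟩))
  set T' := Td ⊔ fromEdgeSet {s(u, w)} with hT'_def
  have hT'le : T' ≤ G := by
    refine sup_le (le_trans sdiff_le t.spanningCoe_le) ?_
    intro a b hab
    rcases Sym2.eq_iff.mp (Set.mem_singleton_iff.mp ((fromEdgeSet_adj _).mp hab).1) with
      ⟨rfl, rfl⟩ | ⟨rfl, rfl⟩
    · exact h
    · exact h.symm
  have huwT' : T'.Adj u w := (sup_adj _ _ _ _).mpr (Or.inr ((fromEdgeSet_adj _).mpr ⟨rfl, h.ne⟩))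
  have hru'w : T'.Reachable u' w := (hreach0.mono le_sup_left).trans huwT'.reachable
  have hstep : ∀ a b : V, T.Adj a b → T'.Reachable a b := by
    intro a b hab
    by_cases hed : s(a, b) = s(u', w)
    · rcases Sym2.eq_iff.mp hed with ⟨rfl, rfl⟩ | ⟨rfl, rfl⟩
      · exact hru'w
      · exact hru'w.symm
    · exact Adj.reachable ((sup_adj _ _ _ _).mpr (Or.inl ((sdiff_adj _ _ _ _).mpr
        ⟨hab, fun hf => hed (Set.mem_singleton_iff.mp ((fromEdgeSet_adj _).mp hf).1)⟩)))
  have hT'conn : T'.Connected :=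
    (connected_iff _).mpr ⟨fun a b => reachable_of_adj_imp hstep (hT.isConnected.preconnected a b),
      hT.isConnected.nonempty⟩
  have hT'ac : T'.IsAcyclic := by
    intro v C hC
    by_cases heC : s(u, w) ∈ C.edges
    · obtain ⟨-, hr2⟩ :=
        adj_and_reachable_delete_edges_iff_exists_cycle.mpr ⟨v, C, hC, heC⟩
      refine hbridge (hr2.mono ?_)
      intro a b hab
      obtain ⟨h1, h2⟩ := (sdiff_adj _ _ _ _).mp hab
      rcases (sup_adj _ _ _ _).mp h1 with hd | hf
      · exact hd
      · exact absurd hf h2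
    · refine hT.IsAcyclic (C.transfer T ?_) (hC.transfer _)
      intro ed hed
      have hmem := C.edges_subset_edgeSet hed
      rw [hT'_def, edgeSet_sup, hTd_def, edgeSet_sdiff] at hmem
      rcases hmem with ⟨hT1, -⟩ | hf
      · exact hT1
      · rw [edgeSet_fromEdgeSet] at hf
        obtain ⟨hq, -⟩ := hf
        rw [Set.mem_singleton_iff.mp hq] at hed
        exact absurd hed heC
  have hT'tree : T'.IsTree := ⟨hT'conn, hT'ac⟩
  -- edge set bookkeeping
  have hd1 : ({s(u', w)} : Set (Sym2 V)) \ {x | x.IsDiag} = {s(u', w)} := by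
    ext x
    simp only [Set.mem_diff, Set.mem_singleton_iff, Set.mem_setOf_eq, and_iff_left_iff_imp]
    rintro rfl
    simp [h'.ne]
  have hd2 : ({s(u, w)} : Set (Sym2 V)) \ {x | x.IsDiag} = {s(u, w)} := by
    ext x
    simp only [Set.mem_diff, Set.mem_singleton_iff, Set.mem_setOf_eq, and_iff_left_iff_imp]
    rintro rfl
    simp [h.ne]
  have hE' : T'.edgeSet = (T.edgeSet \ {s(u', w)}) ∪ {s(u, w)} := by
    rw [hT'_def, edgeSet_sup, hTd_def, edgeSet_sdiff, edgeSet_fromEdgeSet, edgeSet_fromEdgeSet,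
      Sym2.diagSet_eq_setOfPred_isDiag, hd1, hd2]
  set F := T.edgeSet.toFinite.toFinset with hF_def
  have htedge : t.edgeSet = T.edgeSet := by
    ext ed
    induction ed using Sym2.ind with
    | _ a b => simp [Subgraph.mem_edgeSet, SimpleGraph.mem_edgeSet]; rfl
  have he'F : s(u', w) ∈ F := by
    rw [hF_def, Set.Finite.mem_toFinset]
    exact htedge ▸ he'
  have heF : s(u, w) ∉ F := by
    rw [hF_def, Set.Finite.mem_toFinset]
    exact henotin
  have hF' : T'.edgeSet.toFinite.toFinset = insert s(u, w) (F.erase s(u', w)) := by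
    ext x
    rw [Set.Finite.mem_toFinset, hE']
    simp only [Set.mem_union, Set.mem_diff, Set.mem_singleton_iff, Finset.mem_insert,
      Finset.mem_erase, hF_def, Set.Finite.mem_toFinset]
    tauto
  have hsum' : treeCost c T'.edgeSet = c s(u, w) + ∑ x ∈ F.erase s(u', w), c x := by
    rw [treeCost, hF', Finset.sum_insert (fun hx => heF (Finset.mem_of_mem_erase hx))]
  have hsum : treeCost c T.edgeSet = c s(u', w) + ∑ x ∈ F.erase s(u', w), c x :=
    (Finset.add_sum_erase F c he'F).symm
  -- the swapped tree
  refine htmin ⟨SimpleGraph.toSubgraph T' hT'le, ⟨?_, ?_⟩, ?_⟩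
  · simp [SimpleGraph.toSubgraph]
  · have hsc : (SimpleGraph.toSubgraph T' hT'le).spanningCoe = T' := SimpleGraph.ext rfl
    exact isTree_map_iso
      ((SimpleGraph.toSubgraph T' hT'le).spanningCoeEquivCoeOfSpanning (toSubgraph.isSpanning T' hT'le))
      (by rw [hsc]; exact hT'tree)
  · rw [edgeSet_toSubgraph', htedge, hsum', hsum]
    constructor
    · exact add_le_add_left hdom.1 _
    · intro hq
      exact hdom.2 (add_right_cancel hq)
end

section
/- Let G be a connected undirected graph with d-dimensional nonnegative edge costs and transition graph 𝒢 with arc costs γ inherited from preimage edges. Every tree t in G rooted at s spanning a node set U is represented by at least one {s}-U-path p in 𝒢, and any such representation satisfies γ(p) = c(t). Conversely, every {s}-U-path p in 𝒢 represents a unique tree t in G spanning U, and γ(p) = c(t). -/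
open SimpleGraph

namespace Stmt9Aux

variable {V : Type*} {G : SimpleGraph V}

def edgesOf (p : List (V × V)) : Set (Sym2 V) := {e | ∃ uw ∈ p, e = s(uw.1, uw.2)}

lemma walk_subset {S U : Set V} {p : List (V × V)} (h : TransWalk G S U p) : S ⊆ U := by
  induction p generalizing S with
  | nil => exact le_of_eq h
  | cons e p ih => exact (Set.subset_insert _ _).trans (ih h.2)

lemma walk_adj {S U : Set V} {p : List (V × V)} (h : TransWalk G S U p) :
    ∀ uw ∈ p, G.Adj uw.1 uw.2 := by
  induction p generalizing S with
  | nil => simp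
  | cons e p ih =>
    intro uw huw
    rcases List.mem_cons.mp huw with h' | h'
    · exact h' ▸ h.1.2.2
    · exact ih h.2 uw h'

lemma walk_mem {S U : Set V} {p : List (V × V)} (h : TransWalk G S U p) :
    ∀ uw ∈ p, uw.1 ∈ U ∧ uw.2 ∈ U := by
  induction p generalizing S with
  | nil => simp
  | cons e p ih =>
    intro uw huw
    rcases List.mem_cons.mp huw with h' | h'
    · subst h'
      have hsub := walk_subset h.2
      exact ⟨hsub (Set.mem_insert_iff.mpr (Or.inr h.1.1)), hsub (Set.mem_insert _ _)⟩
    · exact ih h.2 uw h'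

lemma walk_snd_not_mem {S U : Set V} {p : List (V × V)} (h : TransWalk G S U p) :
    ∀ uw ∈ p, uw.2 ∉ S := by
  induction p generalizing S with
  | nil => simp
  | cons e p ih =>
    intro uw huw
    rcases List.mem_cons.mp huw with h' | h'
    · exact h' ▸ h.1.2.1
    · exact fun hsmem => ih h.2 uw h' (Set.mem_insert_iff.mpr (Or.inr hsmem))

lemma walk_sym2_nodup {S U : Set V} {p : List (V × V)} (h : TransWalk G S U p) :
    (p.map fun uw => s(uw.1, uw.2)).Nodup := by
  induction p generalizing S with
  | nil => simp
  | cons e p ih =>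
    simp only [List.map_cons, List.nodup_cons]
    refine ⟨?_, ih h.2⟩
    intro hmem
    rcases List.mem_map.mp hmem with ⟨uw, huw, heq⟩
    have h2 := walk_snd_not_mem h.2 uw huw
    rcases Sym2.eq_iff.mp heq with ⟨h1', h2'⟩ | ⟨h1', h2'⟩
    · rw [h2'] at h2; exact h2 (Set.mem_insert _ _)
    · rw [h2'] at h2; exact h2 (Set.mem_insert_iff.mpr (Or.inr h.1.1))

lemma walk_ncard [Fintype V] {S U : Set V} {p : List (V × V)} (h : TransWalk G S U p) :
    U.ncard = S.ncard + p.length := by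
  induction p generalizing S with
  | nil => rw [← h]; simp
  | cons e p ih =>
    rw [ih h.2, Set.ncard_insert_of_notMem h.1.2.1]
    simp [Nat.add_comm, Nat.add_assoc, Nat.add_left_comm]

lemma walk_concat {e : V × V} : ∀ (q : List (V × V)) (S U : Set V),
    TransWalk G S U (q ++ [e]) →
    ∃ W, TransWalk G S W q ∧ TransStep G W e ∧ U = insert e.2 W := by
  intro q
  induction q with
  | nil =>
    intro S U h
    exact ⟨S, rfl, h.1, h.2.symm⟩
  | cons f q ih =>
    intro S U h
    obtain ⟨W, h1, h2, h3⟩ := ih _ _ h.2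
    exact ⟨W, ⟨h.1, h1⟩, h2, h3⟩

lemma pendant_acyclic {K' : SimpleGraph V} {u w : V} (hne : u ≠ w)
    (hw : ∀ x, ¬ K'.Adj w x) (hK : K'.IsAcyclic) :
    (K' ⊔ SimpleGraph.fromEdgeSet {s(u, w)}).IsAcyclic := by
  classical
  set K := K' ⊔ SimpleGraph.fromEdgeSet {s(u, w)} with hKdef
  intro v c hc
  have hadj : ∀ a b : V, K.Adj a b → K'.Adj a b ∨ (a = u ∧ b = w) ∨ (a = w ∧ b = u) := by
    intro a b hab
    rcases (sup_adj _ _ _ _).mp hab with h | h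
    · exact Or.inl h
    · rcases (SimpleGraph.fromEdgeSet_adj _).mp h with ⟨hmem, hne'⟩
      rcases Sym2.eq_iff.mp (Set.mem_singleton_iff.mp hmem) with ⟨h1, h2⟩ | ⟨h1, h2⟩
      · exact Or.inr (Or.inl ⟨h1, h2⟩)
      · exact Or.inr (Or.inr ⟨h1, h2⟩)
  by_cases hws : w ∈ c.support
  · have hc' := hc.rotate hws
    set c' := c.rotate w hws with hc'def
    obtain ⟨x, hwx, q, hq⟩ := SimpleGraph.Walk.not_nil_iff.mp hc'.not_nil
    have hxu : x = u := by
      rcases hadj _ _ hwx with h | ⟨h1, h2⟩ | ⟨h1, h2⟩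
      · exact absurd h (hw x)
      · exact absurd h1.symm hne
      · exact h2
    have hqn : ¬ q.reverse.Nil :=
      SimpleGraph.Walk.not_nil_of_ne (fun h => hne (hxu ▸ h.symm))
    obtain ⟨y, hwy, r, hr⟩ := SimpleGraph.Walk.not_nil_iff.mp hqn
    have hyu : y = u := by
      rcases hadj _ _ hwy with h | ⟨h1, h2⟩ | ⟨h1, h2⟩
      · exact absurd h (hw y)
      · exact absurd h1.symm hne
      · exact h2
    have hmem : s(w, x) ∈ q.edges := by
      have h0 : s(w, y) ∈ q.reverse.edges := by rw [hr]; simp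
      rw [hyu, ← hxu] at h0
      rwa [SimpleGraph.Walk.edges_reverse, List.mem_reverse] at h0
    have htrail := hc'.isTrail
    rw [hq] at htrail
    have := htrail.edges_nodup
    rw [SimpleGraph.Walk.edges_cons, List.nodup_cons] at this
    exact this.1 hmem
  · have key : ∀ a b : V, s(a, b) ∈ c.edges → s(a, b) ∈ K'.edgeSet := by
      intro a b he
      have hKab : K.Adj a b := c.edges_subset_edgeSet he
      rcases hadj _ _ hKab with h | ⟨h1, h2⟩ | ⟨h1, h2⟩
      · exact h
      · subst h1; subst h2
        exact absurd (SimpleGraph.Walk.snd_mem_support_of_mem_edges c he) hws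
      · subst h1; subst h2
        exact absurd (SimpleGraph.Walk.fst_mem_support_of_mem_edges c he) hws
    have hsub : ∀ e ∈ c.edges, e ∈ K'.edgeSet := by
      intro e
      induction e using Sym2.ind with
      | _ a b => exact key a b
    exact hK (c.transfer K' hsub) (hc.transfer hsub)

lemma walk_acyclic (p : List (V × V)) : ∀ (S U : Set V), TransWalk G S U p →
    (SimpleGraph.fromEdgeSet (edgesOf p)).IsAcyclic := by
  induction p using List.reverseRecOn with
  | nil =>
    intro S U h
    have h0 : edgesOf ([] : List (V × V)) = ∅ := by ext e; simp [edgesOf]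
    rw [h0, SimpleGraph.fromEdgeSet_empty]
    exact SimpleGraph.isAcyclic_bot
  | append_singleton q e ih =>
    intro S U h
    obtain ⟨W, hq, hstep, hU⟩ := walk_concat q S U h
    have hEdges : edgesOf (q ++ [e]) = edgesOf q ∪ {s(e.1, e.2)} := by
      ext x; simp [edgesOf, or_comm]
    rw [hEdges, SimpleGraph.fromEdgeSet_union]
    refine pendant_acyclic hstep.2.2.ne ?_ (ih _ _ hq)
    intro x hx
    rcases (SimpleGraph.fromEdgeSet_adj _).mp hx with ⟨hmem, hne'⟩
    rcases hmem with ⟨uw, huw, heq⟩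
    have hmemW := walk_mem hq uw huw
    rcases Sym2.eq_iff.mp heq with ⟨h1, h2⟩ | ⟨h1, h2⟩
    · exact hstep.2.1 (h1 ▸ hmemW.1)
    · exact hstep.2.1 (h1 ▸ hmemW.2)


lemma cross_of_walk {t : G.Subgraph} {S : Set V} :
    ∀ {a b : ↥t.verts} (_w : t.coe.Walk a b), (a : V) ∈ S → (b : V) ∉ S →
      ∃ u w', t.Adj u w' ∧ u ∈ S ∧ w' ∉ S := by
  intro a b w
  induction w with
  | nil => intro ha hb; exact absurd ha hb
  | @cons x y z h q ih =>
    intro ha hb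
    by_cases hy : (y : V) ∈ S
    · exact ih hy hb
    · exact ⟨(x : V), (y : V), (SimpleGraph.Subgraph.coe_adj _ _ _).mp h, ha, hy⟩

lemma build_walk [Fintype V] {U : Set V} {t : G.Subgraph} (ht : IsSpanningTreeOf G U t) :
    ∀ (n : ℕ) (S : Set V), S.Nonempty → S ⊆ U → (U \ S).ncard = n →
      ∃ p, TransWalk G S U p ∧ ∀ uw ∈ p, t.Adj uw.1 uw.2 := by
  intro n
  induction n with
  | zero =>
    intro S hS hSU hcard
    have hd : U \ S = ∅ := by rwa [Set.ncard_eq_zero] at hcard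
    have hUS : S = U := hSU.antisymm (Set.diff_eq_empty.mp hd)
    exact ⟨[], hUS, by simp⟩
  | succ n ih =>
    intro S hS hSU hcard
    have hne : (U \ S).Nonempty := by
      rw [← Set.ncard_pos]
      omega
    obtain ⟨b, hbU, hbS⟩ := hne
    obtain ⟨a, haS⟩ := hS
    have hav : a ∈ t.verts := by rw [ht.1]; exact hSU haS
    have hbv : b ∈ t.verts := by rw [ht.1]; exact hbU
    obtain ⟨wk⟩ := ht.2.isConnected.preconnected ⟨a, hav⟩ ⟨b, hbv⟩
    obtain ⟨u, w', hadj, huS, hwS⟩ := cross_of_walk wk haS hbS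
    have hwU : w' ∈ U := by rw [← ht.1]; exact hadj.snd_mem
    have hstep : TransStep G S (u, w') := ⟨huS, hwS, t.adj_sub hadj⟩
    have hcard' : (U \ insert w' S).ncard = n := by
      have hde : U \ insert w' S = (U \ S) \ {w'} := by
        ext x; simp only [Set.mem_diff, Set.mem_insert_iff, Set.mem_singleton_iff]; tauto
      rw [hde, Set.ncard_diff_singleton_of_mem ((Set.mem_diff _).mpr ⟨hwU, hwS⟩), hcard]
      omega
    obtain ⟨p, hp, hpt⟩ := ih (insert w' S) ⟨w', Set.mem_insert _ _⟩
      (Set.insert_subset hwU hSU) hcard'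
    refine ⟨(u, w') :: p, ⟨hstep, hp⟩, ?_⟩
    intro uw huw
    rcases List.mem_cons.mp huw with h' | h'
    · rw [h']; exact hadj
    · exact hpt uw h'

lemma coe_edgeSet_ncard (t : G.Subgraph) : t.coe.edgeSet.ncard = t.edgeSet.ncard := by
  rw [← SimpleGraph.Subgraph.image_coe_edgeSet_coe,
    Set.ncard_image_of_injective _ (Sym2.map.injective Subtype.val_injective)]

lemma tree_edge_ncard [Fintype V] {U : Set V} {t : G.Subgraph}
    (ht : IsSpanningTreeOf G U t) : t.edgeSet.ncard + 1 = U.ncard := by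
  classical
  haveI : Fintype ↥t.verts := Fintype.ofFinite _
  haveI : Fintype t.coe.edgeSet := Fintype.ofFinite _
  have h := ht.2.card_edgeFinset
  have h1 : t.coe.edgeSet.ncard = t.coe.edgeFinset.card := by
    rw [Set.ncard_eq_toFinset_card']
    congr 1
  have h2 : Fintype.card ↥t.verts = (t.verts).ncard := by
    rw [← Nat.card_coe_set_eq, Nat.card_eq_fintype_card]
  rw [← coe_edgeSet_ncard, h1, h, h2, ht.1]

lemma walk_edges_ncard {p : List (V × V)} (hnd : (p.map fun uw => s(uw.1, uw.2)).Nodup) :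
    (edgesOf p).ncard = p.length := by
  classical
  have h : edgesOf p = ↑(p.map fun uw => s(uw.1, uw.2)).toFinset := by
    ext e; simp [edgesOf, eq_comm]
  rw [h, Set.ncard_coe_finset, List.toFinset_card_of_nodup hnd, List.length_map]

lemma walkCost_eq [Fintype V] {d : ℕ} (c : Sym2 V → Fin d → ℝ)
    {p : List (V × V)} (hnd : (p.map fun uw => s(uw.1, uw.2)).Nodup) :
    walkCost c p = treeCost c (edgesOf p) := by
  classical
  have h1 : walkCost c p = ((p.map fun uw => s(uw.1, uw.2)).map c).sum := by
    simp [walkCost, List.map_map, Function.comp_def]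
  rw [h1, ← List.sum_toFinset c hnd, treeCost]
  apply Finset.sum_congr _ (fun _ _ => rfl)
  ext e
  simp [edgesOf, eq_comm]

lemma subgraph_ext {t₁ t₂ : G.Subgraph} (hv : t₁.verts = t₂.verts)
    (he : t₁.edgeSet = t₂.edgeSet) : t₁ = t₂ := by
  refine SimpleGraph.Subgraph.ext hv ?_
  ext a b
  rw [← SimpleGraph.Subgraph.mem_edgeSet, ← SimpleGraph.Subgraph.mem_edgeSet, he]

def walkSubgraph (G : SimpleGraph V) (U : Set V) (p : List (V × V))
    (hadj : ∀ uw ∈ p, G.Adj uw.1 uw.2)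
    (hmem : ∀ uw ∈ p, uw.1 ∈ U ∧ uw.2 ∈ U) : G.Subgraph where
  verts := U
  Adj a b := ∃ uw ∈ p, s(a, b) = s(uw.1, uw.2)
  adj_sub := by
    rintro a b ⟨uw, huw, heq⟩
    rcases Sym2.eq_iff.mp heq with ⟨h1, h2⟩ | ⟨h1, h2⟩
    · rw [h1, h2]; exact hadj uw huw
    · rw [h1, h2]; exact (hadj uw huw).symm
  edge_vert := by
    rintro a b ⟨uw, huw, heq⟩
    rcases Sym2.eq_iff.mp heq with ⟨h1, h2⟩ | ⟨h1, h2⟩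
    · rw [h1]; exact (hmem uw huw).1
    · rw [h1]; exact (hmem uw huw).2
  symm := by
    refine ⟨?_⟩
    rintro a b ⟨uw, huw, heq⟩
    exact ⟨uw, huw, (Sym2.eq_swap).trans heq⟩

lemma walkSubgraph_edgeSet (G : SimpleGraph V) (U : Set V) (p : List (V × V))
    (hadj : ∀ uw ∈ p, G.Adj uw.1 uw.2) (hmem : ∀ uw ∈ p, uw.1 ∈ U ∧ uw.2 ∈ U) :
    (walkSubgraph G U p hadj hmem).edgeSet = edgesOf p := by
  ext e
  induction e using Sym2.ind with
  | _ a b =>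
    rw [SimpleGraph.Subgraph.mem_edgeSet]
    rfl

lemma reach (H : G.Subgraph) : ∀ (p : List (V × V)) (S U : Set V),
    TransWalk G S U p → U ⊆ H.verts → (∀ uw ∈ p, H.Adj uw.1 uw.2) →
    ∀ (v : V) (hv : v ∈ H.verts), v ∈ U →
      ∃ (u : V) (hu : u ∈ H.verts), u ∈ S ∧ H.coe.Reachable ⟨u, hu⟩ ⟨v, hv⟩ := by
  intro p
  induction p with
  | nil =>
    intro S U h hU hadjs v hv hvU
    exact ⟨v, hv, h ▸ hvU, SimpleGraph.Reachable.refl _⟩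
  | cons e p ih =>
    intro S U h hU hadjs v hv hvU
    obtain ⟨u, hu, huS, hr⟩ := ih (insert e.2 S) U h.2 hU
      (fun uw huw => hadjs uw (List.mem_cons_of_mem _ huw)) v hv hvU
    rcases Set.mem_insert_iff.mp huS with h' | h'
    · subst h'
      have hadj0 : H.Adj e.1 e.2 := hadjs e List.mem_cons_self
      have h1m : e.1 ∈ H.verts := hadj0.fst_mem
      have hcoe : H.coe.Adj ⟨e.1, h1m⟩ ⟨e.2, hu⟩ := hadj0
      exact ⟨e.1, h1m, h.1.1, hcoe.reachable.trans hr⟩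
    · exact ⟨u, hu, h', hr⟩

end Stmt9Aux

/-- every tree rooted at `s` spanning `U` is represented by at least one
`{s}`-`U`-path of equal cost in the transition graph, and every `{s}`-`U`-path represents a
unique spanning tree of `G(U)` of equal cost. -/


theorem stmt_9 {V : Type*} [Fintype V] {d : ℕ} (G : SimpleGraph V)
    (hG : G.Connected) (c : Sym2 V → (Fin d → ℝ)) (hc : ∀ e, 0 ≤ c e)
    (s : V) (U : Set V) (hs : s ∈ U) :
    (∀ t : G.Subgraph, IsSpanningTreeOf G U t →
      (∃ p, TransWalk G {s} U p ∧ Represents G p t) ∧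
      (∀ p, TransWalk G {s} U p → Represents G p t →
        walkCost c p = treeCost c t.edgeSet)) ∧
    (∀ p, TransWalk G {s} U p →
      ∃! t : G.Subgraph, IsSpanningTreeOf G U t ∧ Represents G p t ∧
        walkCost c p = treeCost c t.edgeSet) := by
  classical
  constructor
  · intro t ht
    constructor
    · obtain ⟨p, hp, hpt⟩ := Stmt9Aux.build_walk ht (U \ {s}).ncard {s} ⟨s, rfl⟩
        (Set.singleton_subset_iff.mpr hs) rfl
      refine ⟨p, hp, ?_⟩
      have hnd := Stmt9Aux.walk_sym2_nodup hp
      have hsub : Stmt9Aux.edgesOf p ⊆ t.edgeSet := by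
        rintro e ⟨uw, huw, rfl⟩
        exact (SimpleGraph.Subgraph.mem_edgeSet).mpr (hpt uw huw)
      have h1 : (Stmt9Aux.edgesOf p).ncard = p.length := Stmt9Aux.walk_edges_ncard hnd
      have h2 : t.edgeSet.ncard + 1 = U.ncard := Stmt9Aux.tree_edge_ncard ht
      have h3 : U.ncard = ({s} : Set V).ncard + p.length := Stmt9Aux.walk_ncard hp
      rw [Set.ncard_singleton] at h3
      have h4 : t.edgeSet.ncard ≤ (Stmt9Aux.edgesOf p).ncard := by omega
      exact (Set.eq_of_subset_of_ncard_le hsub h4 (Set.toFinite _)).symm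
    · intro p hp hrep
      have hnd := Stmt9Aux.walk_sym2_nodup hp
      rw [Stmt9Aux.walkCost_eq c hnd, hrep]
      rfl
  · intro p hp
    have hadjp := Stmt9Aux.walk_adj hp
    have hmemp := Stmt9Aux.walk_mem hp
    set t := Stmt9Aux.walkSubgraph G U p hadjp hmemp with htdef
    have hverts : t.verts = U := rfl
    have hedge : t.edgeSet = Stmt9Aux.edgesOf p :=
      Stmt9Aux.walkSubgraph_edgeSet G U p hadjp hmemp
    have hrep : Represents G p t := hedge
    have hadjs : ∀ uw ∈ p, t.Adj uw.1 uw.2 := fun uw huw => ⟨uw, huw, rfl⟩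
    have hsv : s ∈ t.verts := by rw [hverts]; exact hs
    have hconn : t.coe.Connected := by
      haveI : Nonempty ↥t.verts := ⟨⟨s, hsv⟩⟩
      refine ⟨fun a b => ?_⟩
      obtain ⟨u1, hu1, hu1s, hr1⟩ := Stmt9Aux.reach t p {s} U hp
        (by rw [hverts]) hadjs a.1 a.2 (hverts ▸ a.2)
      obtain ⟨u2, hu2, hu2s, hr2⟩ := Stmt9Aux.reach t p {s} U hp
        (by rw [hverts]) hadjs b.1 b.2 (hverts ▸ b.2)
      have e1 : u1 = s := Set.mem_singleton_iff.mp hu1s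
      have e2 : u2 = s := Set.mem_singleton_iff.mp hu2s
      subst e1; subst e2
      exact hr1.symm.trans hr2
    have hacyc : t.coe.IsAcyclic := by
      intro x cyc hcyc
      have hK := Stmt9Aux.walk_acyclic p {s} U hp
      have hmaprel : ∀ {a b : ↥t.verts}, t.coe.Adj a b →
          (SimpleGraph.fromEdgeSet (Stmt9Aux.edgesOf p)).Adj ↑a ↑b := by
        intro a b hab
        have h' : t.Adj ↑a ↑b := (SimpleGraph.Subgraph.coe_adj _ _ _).mp hab
        exact (SimpleGraph.fromEdgeSet_adj _).mpr ⟨h', (t.adj_sub h').ne⟩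
      let f : t.coe →g (SimpleGraph.fromEdgeSet (Stmt9Aux.edgesOf p)) :=
        ⟨Subtype.val, hmaprel⟩
      have hcyc' : (cyc.map f).IsCycle := hcyc.map Subtype.val_injective
      exact hK _ hcyc'
    refine ⟨t, ⟨⟨rfl, ⟨hconn, hacyc⟩⟩, hrep, ?_⟩, ?_⟩
    · have hnd := Stmt9Aux.walk_sym2_nodup hp
      rw [Stmt9Aux.walkCost_eq c hnd, hedge]
    · rintro t' ⟨⟨hv', htree'⟩, hrep', -⟩
      exact Stmt9Aux.subgraph_ext (hv'.trans hverts.symm) (hrep'.trans hedge.symm)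
end

section
/- Let G be a connected undirected graph, s ∈ V, U ⊆ V containing s, and t a spanning tree of G(U) rooted at s that is a path with endpoint s. Then t has a unique representation as an {s}-U-path in the transition graph 𝒢. -/
lemma walk_exists {V : Type*} (G : SimpleGraph V) :
    ∀ (l : List V) (h : V) (A : Set V), h ∈ A → (∀ x ∈ l, x ∉ A) → l.Nodup →
    (∀ q ∈ (h :: l).zip l, G.Adj q.1 q.2) →
    TransWalk G A (A ∪ {x | x ∈ l}) ((h :: l).zip l) := by
  intro l
  induction l with
  | nil => intro h A hA _ _ _; simp [TransWalk]
  | cons w rest ih =>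
    intro h A hA hout hnd hadj
    have hzip : (h :: w :: rest).zip (w :: rest) = (h, w) :: ((w :: rest).zip rest) := rfl
    rw [hzip]
    refine ⟨⟨hA, hout w (by simp), hadj (h, w) (by rw [hzip]; simp)⟩, ?_⟩
    have hset : A ∪ {x | x ∈ w :: rest} = insert w A ∪ {x | x ∈ rest} := by
      ext x; simp; tauto
    rw [hset]
    refine ih w (insert w A) (by simp) ?_ (List.nodup_cons.mp hnd).2 ?_
    · intro x hx
      simp only [Set.mem_insert_iff]
      push_neg
      exact ⟨fun hxw => (List.nodup_cons.mp hnd).1 (hxw ▸ hx), hout x (by simp [hx])⟩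
    · intro q hq
      exact hadj q (by rw [hzip]; exact List.mem_cons_of_mem _ hq)

lemma walk_unique {V : Type*} (G : SimpleGraph V) (E : Set (Sym2 V)) :
    ∀ (l : List V) (h : V) (A : Set V) (p : List (V × V)),
    h ∈ A → (∀ x ∈ l, x ∉ A) → l.Nodup → h ∉ l →
    (∀ e ∈ E, (∀ x ∈ e, x ∈ A) ∨ ∃ q ∈ (h :: l).zip l, e = s(q.1, q.2)) →
    TransWalk G A (A ∪ {x | x ∈ l}) p →
    (∀ uw ∈ p, s(uw.1, uw.2) ∈ E) →
    p = (h :: l).zip l := by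
  intro l
  induction l with
  | nil =>
    intro h A p hA hout hnd hhl hE hw hpE
    cases p with
    | nil => rfl
    | cons e p' =>
      obtain ⟨⟨h1, h2, h3⟩, _⟩ := hw
      rcases hE _ (hpE e (by simp)) with hin | ⟨q, hq, _⟩
      · exact absurd (hin e.2 (Sym2.mem_mk_right e.1 e.2)) h2
      · simp at hq
  | cons w rest ih =>
    intro h A p hA hout hnd hhl hE hw hpE
    have hzip : (h :: w :: rest).zip (w :: rest) = (h, w) :: ((w :: rest).zip rest) := rfl
    cases p with
    | nil =>
      exfalso
      simp only [TransWalk] at hw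
      have : w ∈ A := by rw [hw]; simp
      exact hout w (by simp) this
    | cons e p' =>
      obtain ⟨⟨h1, h2, h3⟩, hw'⟩ := hw
      have hew : e = (h, w) := by
        rcases hE _ (hpE e (by simp)) with hin | ⟨q, hq, heq⟩
        · exact absurd (hin e.2 (Sym2.mem_mk_right e.1 e.2)) h2
        · rw [hzip] at hq
          rcases List.mem_cons.mp hq with rfl | hq'
          · rcases Sym2.eq_iff.mp heq with ⟨ha, hb⟩ | ⟨ha, hb⟩
            · exact Prod.ext ha hb
            · have ha' : e.1 = w := ha
              exact absurd (ha' ▸ h1) (hout w (by simp))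
          · exfalso
            obtain ⟨hq1, hq2⟩ := List.of_mem_zip hq'
            have he1 : e.1 = q.1 ∨ e.1 = q.2 := by
              have hmem : e.1 ∈ s(q.1, q.2) := heq ▸ Sym2.mem_mk_left e.1 e.2
              exact Sym2.mem_iff.mp hmem
            rcases he1 with h' | h'
            · exact hout q.1 hq1 (h' ▸ h1)
            · exact hout q.2 (List.mem_cons_of_mem _ hq2) (h' ▸ h1)
      subst hew
      rw [hzip]
      have hset : A ∪ {x | x ∈ w :: rest} = insert w A ∪ {x | x ∈ rest} := by
        ext x; simp; tauto
      rw [hset] at hw'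
      have hrest := ih w (insert w A) p' (by simp) ?_ (List.nodup_cons.mp hnd).2
        (List.nodup_cons.mp hnd).1 ?_ hw' (fun uw huw => hpE uw (List.mem_cons_of_mem _ huw))
      · rw [hrest]
      · intro x hx
        simp only [Set.mem_insert_iff]
        push_neg
        exact ⟨fun hxw => (List.nodup_cons.mp hnd).1 (hxw ▸ hx), hout x (by simp [hx])⟩
      · intro e' he'
        rcases hE e' he' with hin | ⟨q, hq, heq⟩
        · exact Or.inl fun x hx => Set.mem_insert_iff.mpr (Or.inr (hin x hx))
        · rw [hzip] at hq
          rcases List.mem_cons.mp hq with rfl | hq'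
          · left
            intro x hx
            simp only [heq] at hx
            rcases Sym2.mem_iff.mp hx with rfl | rfl
            · exact Set.mem_insert_iff.mpr (Or.inr hA)
            · exact Set.mem_insert _ _
          · exact Or.inr ⟨q, hq', heq⟩

/-- a spanning tree of `G(U)` that is a path with endpoint `s` has a unique
representation as an `{s}`-`U`-path in the transition graph. -/
theorem stmt_12 {V : Type*} [Fintype V] (G : SimpleGraph V) (hG : G.Connected)
    (s : V) (U : Set V) (hs : s ∈ U)
    (t : G.Subgraph) (ht : IsSpanningTreeOf G U t)
    (hpath : ∃ l : List V, l.Nodup ∧ l.head? = some s ∧ {x | x ∈ l} = U ∧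
      t.edgeSet = {e | ∃ q ∈ l.zip l.tail, e = s(q.1, q.2)}) :
    ∃! p : List (V × V), TransWalk G {s} U p ∧ Represents G p t := by
  obtain ⟨l, hnd, hhead, hU, hE⟩ := hpath
  obtain ⟨rest, rfl⟩ : ∃ rest, l = s :: rest := by
    cases l with
    | nil => simp at hhead
    | cons a rest =>
      simp only [List.head?_cons, Option.some.injEq] at hhead
      exact ⟨rest, by rw [hhead]⟩
  simp only [List.tail_cons] at hE
  have hsrest : s ∉ rest := (List.nodup_cons.mp hnd).1
  have hndr : rest.Nodup := (List.nodup_cons.mp hnd).2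
  have hU' : U = {s} ∪ {x | x ∈ rest} := by
    rw [← hU]; ext x; simp
  have hout : ∀ x ∈ rest, x ∉ ({s} : Set V) := by
    intro x hx
    simp only [Set.mem_singleton_iff]
    exact fun hxs => hsrest (hxs ▸ hx)
  refine ⟨(s :: rest).zip rest, ⟨?_, hE⟩, ?_⟩
  · rw [hU']
    refine walk_exists G rest s {s} rfl hout hndr ?_
    intro q hq
    have : s(q.1, q.2) ∈ t.edgeSet := by rw [hE]; exact ⟨q, hq, rfl⟩
    exact (SimpleGraph.mem_edgeSet G).mp (t.edgeSet_subset this)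
  · rintro p' ⟨hw, hrep⟩
    refine walk_unique G t.edgeSet rest s {s} p' rfl hout hndr hsrest ?_ (hU' ▸ hw) ?_
    · intro e he
      right
      rw [hE] at he
      exact he
    · intro uw huw
      rw [hrep]
      exact ⟨uw, huw, rfl⟩
end

section
/- For any tree t in G rooted at s and spanning a set U with k := |U|, the number of {s}-U-paths in the transition graph 𝒢 representing t is at most (k−1)!, with equality when t has depth one. -/
/-! A transition path from `{s}` to `U` adds the vertices of `U \ {s}` one at a time, so the
list of its added vertices is an ordering of `U \ {s}`; there are `(k-1)!` such orderings. If
the path represents the tree `t`, the arc adding `w` joins `w` to a vertex `u` reached before.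
The reached set stays connected in `t`, so a second such `u'` would close a cycle of `t` through
`w`: the arc is forced, and the path is determined by its ordering. For a star centred at `s`,
every ordering is realised by the arcs `(s, v)`. -/

open SimpleGraph

theorem Set.Finite.ncard_setOf_nodup_and_mem_iff {α : Type*} {X : Set α} (hX : X.Finite) :
    {l : List α | l.Nodup ∧ ∀ x, x ∈ l ↔ x ∈ X}.ncard = X.ncard.factorial := by
  classical
  set l₀ := hX.toFinset.toList
  have hset :
      {l : List α | l.Nodup ∧ ∀ x, x ∈ l ↔ x ∈ X} = ↑l₀.permutations.toFinset := by
    ext l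
    have hmem : ∀ x, x ∈ l₀ ↔ x ∈ X := by simp [l₀]
    simp only [List.coe_toFinset, List.mem_permutations]
    constructor
    · rintro ⟨hl, hlX⟩
      exact (List.perm_ext_iff_of_nodup hl hX.toFinset.nodup_toList).2 fun x => by
        rw [hlX, hmem]
    · intro hl
      exact ⟨hl.nodup_iff.2 hX.toFinset.nodup_toList, fun x => by rw [hl.mem_iff, hmem]⟩
  rw [hset, Set.ncard_coe_finset, List.toFinset_card_of_nodup (List.nodup_permutations _
    hX.toFinset.nodup_toList), List.length_permutations, Finset.length_toList,
    Set.ncard_eq_toFinset_card X hX]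

namespace SimpleGraph

variable {V : Type*} {H : SimpleGraph V}

theorem IsAcyclic.spanningCoe {s : Set V} {G : SimpleGraph s} (h : G.IsAcyclic) :
    G.spanningCoe.IsAcyclic := by
  intro v c hc
  have hs : ∀ x ∈ c.support, x ∈ s := fun x hx => by
    obtain ⟨y, -, hxy⟩ := adj_of_mem_walk_support c hc.not_nil hx
    obtain ⟨-, a, -, -, rfl, -⟩ := hxy
    exact a.2
  have hind : (G.spanningCoe.induce s).IsAcyclic := by rwa [induce_spanningCoe]
  refine hind (c.induce s hs) ?_
  rw [← Walk.map_induce c hs] at hc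
  exact (Walk.isCycle_map_iff_of_injective Subtype.val_injective).1 hc

theorem IsAcyclic.eq_of_adj_of_walk (hH : H.IsAcyclic) {u u' w : V} (hu : H.Adj u w)
    (hu' : H.Adj u' w) (p : H.Walk u u') (hw : w ∉ p.support) : u = u' := by
  classical
  have hpath : (Walk.cons hu.symm p.bypass).IsPath :=
    p.bypass_isPath.cons fun h => hw (p.support_bypass_subset_support h)
  exact ((hH.eq_snd_of_adj_start hpath hu'.symm (Walk.end_mem_support _)).trans
    (Walk.snd_cons _ _)).symm

theorem IsAcyclic.not_adj_of_adj_of_adj (hH : H.IsAcyclic) {s a b : V} (ha : H.Adj s a)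
    (hb : H.Adj s b) : ¬H.Adj a b := fun hab =>
  ha.ne (hH.eq_of_adj_of_walk hab hb (Walk.cons ha.symm Walk.nil) (by
    simp [hab.ne.symm, hb.ne.symm])).symm

theorem IsAcyclic.eq_of_adj_of_preconnected_induce (hH : H.IsAcyclic) {A : Set V}
    (hA : (H.induce A).Preconnected) {u u' w : V} (hu : u ∈ A) (hu' : u' ∈ A) (hw : w ∉ A)
    (huw : H.Adj u w) (hu'w : H.Adj u' w) : u = u' := by
  obtain ⟨q⟩ := hA ⟨u, hu⟩ ⟨u', hu'⟩
  let p := q.map (Embedding.induce A).toHom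
  have hp : ∀ x ∈ p.support, x ∈ A := by
    simp only [p, Walk.support_map, List.mem_map]
    rintro _ ⟨x, -, rfl⟩
    exact x.2
  exact hH.eq_of_adj_of_walk huw hu'w p fun hwp => hw (hp w hwp)

theorem Preconnected.induce_insert {A : Set V}
    (hA : (H.induce A).Preconnected) {u w : V} (hu : u ∈ A) (huw : H.Adj u w) :
    (H.induce (insert w A)).Preconnected := by
  rw [← Set.union_singleton]
  exact (connected_induce_union hA Preconnected.of_subsingleton hu
    (Set.mem_singleton w) huw).preconnected

end SimpleGraph

namespace TransWalk

variable {V : Type*} {G : SimpleGraph V}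

theorem subset {A W : Set V} {p : List (V × V)} (h : TransWalk G A W p) : A ⊆ W := by
  induction p generalizing A with
  | nil => exact (h : A = W).le
  | cons e p ih => exact (Set.subset_insert _ _).trans (ih h.2)

theorem mem_map_snd_iff {A W : Set V} {p : List (V × V)} (h : TransWalk G A W p) (x : V) :
    x ∈ p.map Prod.snd ↔ x ∈ W \ A := by
  induction p generalizing A with
  | nil =>
    obtain rfl : A = W := h
    simp
  | cons e p ih =>
    obtain ⟨⟨-, he, -⟩, h⟩ := h
    have heW : e.2 ∈ W := h.subset (Set.mem_insert _ _)
    rw [List.map_cons, List.mem_cons, ih h]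
    by_cases hx : x = e.2
    · subst hx
      simp [heW, he]
    · simp [hx]

theorem nodup_map_snd {A W : Set V} {p : List (V × V)} (h : TransWalk G A W p) :
    (p.map Prod.snd).Nodup := by
  induction p generalizing A with
  | nil => exact List.nodup_nil
  | cons e p ih =>
    rw [List.map_cons, List.nodup_cons, h.2.mem_map_snd_iff]
    exact ⟨fun he => he.2 (Set.mem_insert _ _), ih h.2⟩

theorem eq_of_map_snd_eq {H : SimpleGraph V} (hH : H.IsAcyclic) {A W : Set V}
    (hA : (H.induce A).Preconnected) {p q : List (V × V)} (hp : TransWalk G A W p)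
    (hq : TransWalk G A W q) (hpH : ∀ e ∈ p, H.Adj e.1 e.2) (hqH : ∀ e ∈ q, H.Adj e.1 e.2)
    (hpq : p.map Prod.snd = q.map Prod.snd) : p = q := by
  induction p generalizing A q with
  | nil => exact (List.map_eq_nil_iff.mp hpq.symm).symm
  | cons e p ih =>
    obtain _ | ⟨f, q⟩ := q
    · simp at hpq
    simp only [List.map_cons, List.cons.injEq] at hpq
    obtain ⟨hsnd, hpq⟩ := hpq
    obtain ⟨⟨he, he2, -⟩, hp⟩ := hp
    obtain ⟨⟨hf, -, -⟩, hq⟩ := hq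
    have heH := hpH e List.mem_cons_self
    have hfH : H.Adj f.1 e.2 := hsnd ▸ hqH f List.mem_cons_self
    obtain rfl : e = f :=
      Prod.ext (hH.eq_of_adj_of_preconnected_induce hA he hf he2 heH hfH) hsnd
    rw [ih (hA.induce_insert he heH) hp hq (fun x hx => hpH x (List.mem_cons_of_mem _ hx))
      (fun x hx => hqH x (List.mem_cons_of_mem _ hx)) hpq]

end TransWalk

theorem Represents.adj {V : Type*} {G : SimpleGraph V} {p : List (V × V)} {t : G.Subgraph}
    (h : Represents G p t) {e : V × V} (he : e ∈ p) : t.Adj e.1 e.2 :=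
  (h ▸ ⟨e, he, rfl⟩ : s(e.1, e.2) ∈ t.edgeSet)

section Star

variable {V : Type*} {G : SimpleGraph V} {s : V}

theorem transWalk_map_prodMk {A W : Set V} {l : List V} (hsA : s ∈ A) (hAW : A ⊆ W)
    (hl : l.Nodup) (hlW : ∀ x, x ∈ l ↔ x ∈ W \ A) (hadj : ∀ v ∈ l, G.Adj s v) :
    TransWalk G A W (l.map (s, ·)) := by
  induction l generalizing A with
  | nil =>
    exact hAW.antisymm fun x hx => by_contra fun hxA => by simpa using (hlW x).2 ⟨hx, hxA⟩
  | cons v l ih =>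
    obtain ⟨hvl, hl⟩ := List.nodup_cons.mp hl
    have hvW := (hlW v).1 List.mem_cons_self
    refine ⟨⟨hsA, hvW.2, hadj v List.mem_cons_self⟩, ih (Set.mem_insert_of_mem _ hsA)
      (Set.insert_subset hvW.1 hAW) hl (fun x => ?_)
      (fun x hx => hadj x (List.mem_cons_of_mem _ hx))⟩
    have := hlW x
    by_cases hx : x = v
    · subst hx
      simp [hvl]
    · simp_all

theorem represents_map_prodMk {t : G.Subgraph} (ht : t.spanningCoe.IsAcyclic)
    {l : List V} (hl : ∀ x, x ∈ l ↔ x ∈ t.verts \ {s})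
    (hstar : ∀ v ∈ t.verts, v ≠ s → t.Adj s v) :
    Represents G (l.map (s, ·)) t := by
  have hedge : ∀ a b, t.Adj a b ↔ ∃ v ∈ t.verts \ {s}, s(a, b) = s(s, v) := by
    refine fun a b => ⟨fun hab => ?_, fun ⟨v, ⟨hv, hvs⟩, he⟩ => ?_⟩
    · by_cases has : a = s
      · subst has
        exact ⟨b, ⟨hab.snd_mem, hab.ne.symm⟩, rfl⟩
      by_cases hbs : b = s
      · subst hbs
        exact ⟨a, ⟨hab.fst_mem, has⟩, Sym2.eq_swap⟩
      exact absurd hab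
        (ht.not_adj_of_adj_of_adj (hstar a hab.fst_mem has) (hstar b hab.snd_mem hbs))
    · exact Subgraph.mem_edgeSet.1 (he ▸ hstar v hv hvs)
  ext e
  induction e using Sym2.ind with
  | _ a b => simpa [hl] using hedge a b

end Star

theorem stmt_13_general {V : Type*} [Fintype V] (G : SimpleGraph V)
    (s : V) (U : Set V) (hs : s ∈ U)
    (t : G.Subgraph) (ht : IsSpanningTreeOf G U t) :
    {p : List (V × V) | TransWalk G {s} U p ∧ Represents G p t}.ncard ≤
      Nat.factorial (U.ncard - 1) ∧
    ((∀ v ∈ U, v ≠ s → t.Adj s v) →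
      {p : List (V × V) | TransWalk G {s} U p ∧ Represents G p t}.ncard =
        Nat.factorial (U.ncard - 1)) := by
  obtain ⟨rfl, htree⟩ := ht
  have hacyc : t.spanningCoe.IsAcyclic := by
    rw [← Subgraph.spanningCoe_coe]
    exact htree.isAcyclic.spanningCoe
  set S := {p : List (V × V) | TransWalk G {s} t.verts p ∧ Represents G p t}
  set L := {l : List V | l.Nodup ∧ ∀ x, x ∈ l ↔ x ∈ t.verts \ {s}}
  have hL : L.ncard = Nat.factorial (t.verts.ncard - 1) := by
    rw [(Set.toFinite _).ncard_setOf_nodup_and_mem_iff, Set.ncard_sdiff_singleton_of_mem hs]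
  have hmaps : Set.MapsTo (List.map Prod.snd) S L :=
    fun p hp => ⟨hp.1.nodup_map_snd, hp.1.mem_map_snd_iff⟩
  have hinj : Set.InjOn (List.map Prod.snd) S := fun p hp q hq =>
    hp.1.eq_of_map_snd_eq hacyc Preconnected.of_subsingleton hq.1 (fun _ => hp.2.adj)
      (fun _ => hq.2.adj)
  refine ⟨hL ▸ Set.ncard_le_ncard_of_injOn _ hmaps hinj
    (Set.finite_of_ncard_pos (hL ▸ Nat.factorial_pos _)), fun hstar => ?_⟩
  have hsurj : Set.SurjOn (List.map Prod.snd) S L := fun l ⟨hl, hlU⟩ =>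
    ⟨l.map (s, ·), ⟨transWalk_map_prodMk rfl (Set.singleton_subset_iff.2 hs) hl hlU
      fun v hv => t.adj_sub (hstar v ((hlU v).1 hv).1 ((hlU v).1 hv).2),
      represents_map_prodMk hacyc hlU hstar⟩, by simp⟩
  rw [← hL, ← hinj.ncard_image, hmaps.image_subset.antisymm hsurj]

/-- any tree rooted at `s` spanning `U` with `k = |U|` has at most `(k-1)!`
representations as `{s}`-`U`-paths, with equality for depth-one trees. -/
theorem stmt_13 {V : Type*} [Fintype V] (G : SimpleGraph V) (hG : G.Connected)
    (s : V) (U : Set V) (hs : s ∈ U)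
    (t : G.Subgraph) (ht : IsSpanningTreeOf G U t) :
    {p : List (V × V) | TransWalk G {s} U p ∧ Represents G p t}.ncard ≤
      Nat.factorial (U.ncard - 1) ∧
    ((∀ v ∈ U, v ≠ s → t.Adj s v) →
      {p : List (V × V) | TransWalk G {s} U p ∧ Represents G p t}.ncard =
        Nat.factorial (U.ncard - 1)) :=
  stmt_13_general G s U hs t ht
end
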